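/- Fix 0 < β < 1, C_β = 2π e^{-2^β}, and define g(k) = 1/(C_β (1-ik) exp((1+ik)^β)) for real k. Then for every integer q ≥ 0 and every real k, |g^{(q)}(k)| ≤ (4/(3 C_β)) · 4^q · q!. -/

import Mathlib

open Complex


open Metric
open scoped NNReal

-- transfer lemma
lemma iter_comp_ofReal {G : ℂ → ℂ} {S : Set ℂ} (hS : IsOpen S)
    (hG : AnalyticOnNhd ℂ G S) (hR : ∀ x : ℝ, (x : ℂ) ∈ S) (n : ℕ) (x : ℝ) :
    iteratedDeriv n (fun t : ℝ => G t) x = iteratedDeriv n G x := by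
  induction n generalizing x with
  | zero => simp
  | succ n ih =>
    rw [iteratedDeriv_succ, iteratedDeriv_succ]
    have hfun : iteratedDeriv n (fun t : ℝ => G t) = fun t : ℝ => iteratedDeriv n G t :=
      funext fun t => ih t
    rw [hfun]
    have hA : AnalyticOnNhd ℂ (iteratedDeriv n G) S := by
      have := hG.iterated_deriv n
      simpa [iteratedDeriv_eq_iterate] using this
    have hd : HasDerivAt (iteratedDeriv n G) (deriv (iteratedDeriv n G) x) (x : ℂ) :=
      ((hA _ (hR x)).differentiableAt).hasDerivAt
    exact hd.comp_ofReal.deriv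

-- Cauchy estimate
lemma cauchy_est {G : ℂ → ℂ} {c : ℂ} {R : ℝ≥0} (hR : 0 < R)
    (hd : DifferentiableOn ℂ G (closedBall c R)) {M : ℝ}
    (hM : ∀ z ∈ sphere c (R : ℝ), ‖G z‖ ≤ M) (n : ℕ) :
    ‖iteratedDeriv n G c‖ ≤ n.factorial * M * ((R : ℝ)⁻¹) ^ n := by
  have h := hd.hasFPowerSeriesOnBall hR
  have h1 : iteratedDeriv n G c = iteratedFDeriv ℂ n G c (fun _ => 1) :=
    iteratedDeriv_eq_iteratedFDeriv ..
  have h2 := h.factorial_smul (1 : ℂ) n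
  rw [h1, ← h2]
  have h3 : ‖(n.factorial : ℕ) • cauchyPowerSeries G c R n (fun _ => (1:ℂ))‖
      = n.factorial * ‖cauchyPowerSeries G c R n (fun _ => (1:ℂ))‖ := by
    rw [← Nat.cast_smul_eq_nsmul ℝ, norm_smul, Real.norm_natCast]
  rw [h3, mul_assoc]
  refine mul_le_mul_of_nonneg_left ?_ (by positivity)
  have h4 : ‖cauchyPowerSeries G c R n (fun _ => (1:ℂ))‖ ≤ ‖cauchyPowerSeries G c R n‖ := by
    refine le_trans ((cauchyPowerSeries G c R n).le_opNorm _) ?_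
    simp
  refine h4.trans ((norm_cauchyPowerSeries_le G c R n).trans ?_)
  have hint : (∫ θ : ℝ in (0)..2 * Real.pi, ‖G (circleMap c R θ)‖) ≤ M * (2 * Real.pi) := by
    have := intervalIntegral.norm_integral_le_of_norm_le_const
      (C := M) (f := fun θ : ℝ => ‖G (circleMap c R θ)‖) (a := 0) (b := 2 * Real.pi) ?_
    · calc (∫ θ : ℝ in (0)..2 * Real.pi, ‖G (circleMap c R θ)‖)
          ≤ ‖∫ θ : ℝ in (0)..2 * Real.pi, ‖G (circleMap c R θ)‖‖ := le_abs_self _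
        _ ≤ M * |2 * Real.pi - 0| := this
        _ = M * (2 * Real.pi) := by rw [sub_zero, abs_of_pos Real.two_pi_pos]
    · intro t _
      rw [Real.norm_eq_abs, _root_.abs_of_nonneg (norm_nonneg _)]
      exact hM _ (circleMap_mem_sphere c R.2 t)
  have hR' : |(R : ℝ)| = (R : ℝ) := abs_of_nonneg R.2
  rw [hR']
  refine mul_le_mul_of_nonneg_right ?_ (by positivity)
  calc (2 * Real.pi)⁻¹ * ∫ θ : ℝ in (0)..2 * Real.pi, ‖G (circleMap c R θ)‖
      ≤ (2 * Real.pi)⁻¹ * (M * (2 * Real.pi)) := by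
        exact mul_le_mul_of_nonneg_left hint (by positivity)
    _ = M := by field_simp

lemma re_cpow_nonneg {w : ℂ} (hw : 0 < w.re) {β : ℝ} (hβ0 : 0 ≤ β) (hβ1 : β ≤ 1) :
    0 ≤ (w ^ (β : ℂ)).re := by
  have hw0 : w ≠ 0 := fun h => by simp [h] at hw
  rw [Complex.cpow_def_of_ne_zero hw0, Complex.exp_re]
  have harg : |w.arg| < Real.pi / 2 :=
    Complex.abs_arg_lt_pi_div_two_iff.mpr (Or.inl hw)
  have him : (Complex.log w * (β : ℂ)).im = β * w.arg := by
    simp [Complex.log_im, mul_comm]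
  rw [him]
  have hcos : 0 ≤ Real.cos (β * w.arg) := by
    apply Real.cos_nonneg_of_mem_Icc
    constructor
    · nlinarith [abs_le.mp harg.le, abs_nonneg w.arg, neg_abs_le w.arg, le_abs_self w.arg]
    · nlinarith [abs_le.mp harg.le, abs_nonneg w.arg, neg_abs_le w.arg, le_abs_self w.arg]
  positivity


/-- Derivative bound for the full LCHS weight `g(k) = 1/(C_β (1-ik) exp((1+ik)^β))`:
`|g^{(q)}(k)| ≤ (4/(3C_β)) 4^q q!`. -/
theorem stmt10 (β : ℝ) (hβ0 : 0 < β) (hβ1 : β < 1) (q : ℕ) (k : ℝ) :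
    let C : ℝ := 2 * Real.pi * Real.exp (-(2 : ℝ) ^ β)
    let g : ℝ → ℂ := fun k =>
      1 / ((C : ℂ) * (1 - Complex.I * k) * Complex.exp ((1 + Complex.I * k) ^ (β : ℂ)))
    ‖iteratedDeriv q g k‖ ≤ (4 / (3 * C)) * 4 ^ q * (Nat.factorial q : ℝ) := by
  intro C g
  have hC : 0 < C := by positivity
  set G : ℂ → ℂ := fun z =>
    1 / ((C : ℂ) * (1 - Complex.I * z) * Complex.exp ((1 + Complex.I * z) ^ (β : ℂ))) with hGdef
  -- differentiability wherever |Im z| < 1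
  have hdiff : ∀ z : ℂ, |z.im| < 1 → DifferentiableAt ℂ G z := by
    intro z hz
    have h1re : 0 < (1 + Complex.I * z).re := by
      simp only [Complex.add_re, Complex.one_re, Complex.mul_re, Complex.I_re, Complex.I_im]
      have := abs_lt.mp hz
      simp; linarith [this.2]
    have h2re : 0 < (1 - Complex.I * z).re := by
      have := abs_lt.mp hz
      simp; linarith [this.1]
    have hd1 : DifferentiableAt ℂ (fun z : ℂ => 1 - Complex.I * z) z :=
      (differentiableAt_const _).sub ((differentiableAt_id).const_mul _)
    have hd2 : DifferentiableAt ℂ (fun z : ℂ => 1 + Complex.I * z) z :=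
      (differentiableAt_const _).add ((differentiableAt_id).const_mul _)
    have hd3 : DifferentiableAt ℂ (fun z : ℂ => (1 + Complex.I * z) ^ (β : ℂ)) z :=
      hd2.cpow (differentiableAt_const _) (Or.inl h1re)
    have hne : (C : ℂ) * (1 - Complex.I * z) * Complex.exp ((1 + Complex.I * z) ^ (β : ℂ)) ≠ 0 := by
      apply mul_ne_zero (mul_ne_zero ?_ ?_) (Complex.exp_ne_zero _)
      · exact_mod_cast hC.ne'
      · intro h; rw [h] at h2re; simp at h2re
    exact (differentiableAt_const _).div
      (((differentiableAt_const _).mul hd1).mul hd3.cexp) hne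
  -- norm bound on the sphere of radius 1/4
  have hbound : ∀ z ∈ Metric.sphere (k : ℂ) ((1/4 : ℝ≥0) : ℝ), ‖G z‖ ≤ 4 / (3 * C) := by
    intro z hz
    have him : |z.im| ≤ 1/4 := by
      have h1 : |(z - (k : ℂ)).im| ≤ ‖z - (k:ℂ)‖ := Complex.abs_im_le_norm _
      have h2 : ‖z - (k:ℂ)‖ = 1/4 := by simpa [Metric.mem_sphere, dist_eq_norm] using hz
      simpa [Complex.sub_im, Complex.ofReal_im] using h1.trans_eq h2
    have hb := abs_le.mp him
    have h2re : (3:ℝ)/4 ≤ (1 - Complex.I * z).re := by simp; linarith [hb.1]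
    have h1re : 0 < (1 + Complex.I * z).re := by simp; linarith [hb.2]
    have hrepow : 0 ≤ ((1 + Complex.I * z) ^ (β : ℂ)).re :=
      re_cpow_nonneg h1re hβ0.le hβ1.le
    have hnorm1 : (3:ℝ)/4 ≤ ‖1 - Complex.I * z‖ :=
      h2re.trans (Complex.re_le_norm _)
    have hnorm2 : (1:ℝ) ≤ ‖Complex.exp ((1 + Complex.I * z) ^ (β : ℂ))‖ := by
      rw [Complex.norm_exp]
      exact Real.one_le_exp hrepow
    rw [hGdef]
    simp only [norm_div, norm_one, norm_mul, Complex.norm_real, Real.norm_eq_abs,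
      _root_.abs_of_pos hC]
    rw [div_le_div_iff₀ (by positivity) (by positivity)]
    have : C * (3/4) * 1 ≤ C * ‖1 - Complex.I * z‖ * ‖Complex.exp ((1 + Complex.I * z) ^ (β : ℂ))‖ := by
      apply mul_le_mul (mul_le_mul_of_nonneg_left hnorm1 hC.le) hnorm2 zero_le_one
      positivity
    nlinarith [this]
  -- transfer real iterated derivative to complex one
  have htrans : iteratedDeriv q g k = iteratedDeriv q G (k : ℂ) := by
    have hS : IsOpen {z : ℂ | |z.im| < 1} := by
      have : {z : ℂ | |z.im| < 1} = Complex.im ⁻¹' (Set.Ioo (-1) 1) := by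
        ext z; simp [abs_lt]
      rw [this]
      exact isOpen_Ioo.preimage Complex.continuous_im
    have hA : AnalyticOnNhd ℂ G {z : ℂ | |z.im| < 1} := by
      apply DifferentiableOn.analyticOnNhd _ hS
      exact fun z hz => (hdiff z hz).differentiableWithinAt
    exact iter_comp_ofReal hS hA (fun x => by simp) q k
  rw [htrans]
  have hest := cauchy_est (G := G) (c := (k:ℂ)) (R := 1/4) (by norm_num)
    (fun z hz => by
      refine (hdiff z ?_).differentiableWithinAt
      have h1 : |(z - (k : ℂ)).im| ≤ ‖z - (k:ℂ)‖ := Complex.abs_im_le_norm _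
      have h2 : ‖z - (k:ℂ)‖ ≤ 1/4 := by
        simpa [Metric.mem_closedBall, dist_eq_norm] using hz
      have : |z.im| ≤ 1/4 := by
        simpa [Complex.sub_im, Complex.ofReal_im] using h1.trans h2
      linarith [this])
    hbound q
  have h14 : (((1/4 : ℝ≥0) : ℝ))⁻¹ = 4 := by norm_num
  rw [h14] at hest
  calc ‖iteratedDeriv q G (k:ℂ)‖ ≤ q.factorial * (4 / (3 * C)) * 4 ^ q := hest
    _ = 4 / (3 * C) * 4 ^ q * q.factorial := by ring
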